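/- arXiv:1503.08625 — 2 statements merged into one kernel-verified Lean document; each statement's English description precedes it below -/
import Mathlib

section
/- Let H be a complex Hilbert space, S_H the unilateral shift on ℓ²(ℕ,H), and S the shift on ℓ²(ℕ). Suppose W₁, W₂ : ℓ²(ℕ) → ℓ²(ℕ,H) are isometries with Wᵢ ∘ S = S_H ∘ Wᵢ, and y₁, y₂ ∈ ℓ²(ℕ) are outer vectors (the closed span of {Sⁿ yᵢ : n ≥ 0} is ℓ²(ℕ)) such that W₁ y₁ = W₂ y₂. Then U := W₂* W₁ is a unitary operator on ℓ²(ℕ) satisfying U S = S U, U y₁ = y₂, and W₂ U = W₁. -/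
noncomputable section

open scoped ENNReal InnerProductSpace

set_option linter.unusedSectionVars false

namespace Shift

variable (H : Type*) [NormedAddCommGroup H] [InnerProductSpace ℂ H]

/-- The underlying function of the unilateral shift: `(shiftFun x) 0 = 0`,
`(shiftFun x) (n+1) = x n`. -/
def shiftFun (x : ℕ → H) : ℕ → H
  | 0 => 0
  | n + 1 => x n

variable {H}

theorem memℓp_shiftFun {x : ℕ → H} (hx : Memℓp x 2) : Memℓp (shiftFun H x) 2 := by
  apply memℓp_gen
  have h2 : (0:ℝ) < (2 : ℝ≥0∞).toReal := by norm_num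
  have hs : Summable fun n : ℕ => ‖x n‖ ^ (2 : ℝ≥0∞).toReal := (memℓp_gen_iff h2).1 hx
  exact (summable_nat_add_iff 1).1 (by simpa [shiftFun] using hs)

theorem tsum_shiftFun (x : ℕ → H) (hx : Memℓp x 2) :
    (∑' n, ‖shiftFun H x n‖ ^ (2 : ℝ≥0∞).toReal) = ∑' n, ‖x n‖ ^ (2 : ℝ≥0∞).toReal := by
  have h2 : (0:ℝ) < (2 : ℝ≥0∞).toReal := by norm_num
  rw [Summable.tsum_eq_zero_add (memℓp_gen_iff h2 |>.1 (memℓp_shiftFun hx))]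
  simp [shiftFun]

variable (H)

/-- The unilateral shift as a linear isometry on `ℓ²(ℕ, H)`. -/
def shiftLi : lp (fun _ : ℕ => H) 2 →ₗᵢ[ℂ] lp (fun _ : ℕ => H) 2 where
  toFun x := ⟨shiftFun H x, memℓp_shiftFun (lp.memℓp x)⟩
  map_add' x y := by
    apply lp.ext
    funext n
    cases n <;> simp [shiftFun, lp.coeFn_add] <;> erw [Pi.add_apply] <;> simp [shiftFun]
  map_smul' c x := by
    apply lp.ext
    funext n
    cases n <;> simp [shiftFun, lp.coeFn_smul]
  norm_map' x := by
    have h2 : (0:ℝ) < (2 : ℝ≥0∞).toReal := by norm_num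
    rw [lp.norm_eq_tsum_rpow h2, lp.norm_eq_tsum_rpow h2]
    congr 1
    exact tsum_shiftFun x (lp.memℓp x)

/-- The unilateral shift `S_H` on `ℓ²(ℕ, H)`, as a continuous linear map:
`(shift H x) 0 = 0` and `(shift H x) (n+1) = x n`. -/
def shift : lp (fun _ : ℕ => H) 2 →L[ℂ] lp (fun _ : ℕ => H) 2 :=
  (shiftLi H).toContinuousLinearMap

variable {H}

theorem adjoint_apply_self_of_isometry
    {E F : Type*} [NormedAddCommGroup E] [InnerProductSpace ℂ E] [CompleteSpace E]
    [NormedAddCommGroup F] [InnerProductSpace ℂ F] [CompleteSpace F]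
    (W : E →L[ℂ] F) (hW : Isometry W) (x : E) :
    ContinuousLinearMap.adjoint W (W x) = x := by
  have hn : ∀ z, ‖W z‖ = ‖z‖ := (AddMonoidHomClass.isometry_iff_norm W).mp hW
  apply ext_inner_right ℂ
  intro v
  rw [ContinuousLinearMap.adjoint_inner_left]
  exact LinearIsometry.inner_map_map ⟨(W : E →ₗ[ℂ] F), hn⟩ x v

theorem shift_pow_comm {H : Type*} [NormedAddCommGroup H] [InnerProductSpace ℂ H]
    [CompleteSpace H]
    (W : lp (fun _ : ℕ => ℂ) 2 →L[ℂ] lp (fun _ : ℕ => H) 2)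
    (hWS : W.comp (shift ℂ) = (shift H).comp W) (n : ℕ) (x : lp (fun _ : ℕ => ℂ) 2) :
    W ((shift ℂ ^ n) x) = ((shift H ^ n)) (W x) := by
  induction n with
  | zero => simp
  | succ n ih =>
    rw [pow_succ', pow_succ']
    have h1 : W ((shift ℂ) ((shift ℂ ^ n) x)) = (shift H) (W ((shift ℂ ^ n) x)) :=
      congrFun (congrArg DFunLike.coe hWS) ((shift ℂ ^ n) x)
    simp only [ContinuousLinearMap.mul_apply] at *
    rw [h1, ih]

theorem range_eq_orbit_closure {H : Type*} [NormedAddCommGroup H] [InnerProductSpace ℂ H]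
    [CompleteSpace H]
    (W : lp (fun _ : ℕ => ℂ) 2 →L[ℂ] lp (fun _ : ℕ => H) 2)
    (hW : Isometry W) (hWS : W.comp (shift ℂ) = (shift H).comp W)
    (y : lp (fun _ : ℕ => ℂ) 2)
    (hy : (Submodule.span ℂ (Set.range fun n : ℕ => (shift ℂ ^ n) y)).topologicalClosure = ⊤) :
    Set.range W =
      ((Submodule.span ℂ (Set.range fun n : ℕ => ((shift H) ^ n) (W y))).topologicalClosure :
        Set (lp (fun _ : ℕ => H) 2)) := by
  have hmap : (Submodule.span ℂ (Set.range fun n : ℕ => (shift ℂ ^ n) y)).map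
      (W : lp (fun _ : ℕ => ℂ) 2 →ₗ[ℂ] lp (fun _ : ℕ => H) 2)
      = Submodule.span ℂ (Set.range fun n : ℕ => ((shift H) ^ n) (W y)) := by
    rw [Submodule.map_span]
    congr 1
    rw [← Set.range_comp]
    have h : (⇑(W : lp (fun _ : ℕ => ℂ) 2 →ₗ[ℂ] lp (fun _ : ℕ => H) 2) ∘
        fun n : ℕ => (shift ℂ ^ n) y) = fun n : ℕ => ((shift H) ^ n) (W y) :=
      funext fun n => shift_pow_comm W hWS n y
    rw [h]
  apply Set.Subset.antisymm
  · rintro _ ⟨x, rfl⟩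
    have hx : x ∈ (Submodule.span ℂ
        (Set.range fun n : ℕ => (shift ℂ ^ n) y)).topologicalClosure := by
      rw [hy]; trivial
    have := Submodule.topologicalClosure_map W
      (Submodule.span ℂ (Set.range fun n : ℕ => (shift ℂ ^ n) y))
      (Submodule.mem_map_of_mem hx)
    rwa [hmap] at this
  · have hclosed : IsClosed (Set.range W) := hW.isClosedEmbedding.isClosed_range
    have hsub : Submodule.span ℂ (Set.range fun n : ℕ => ((shift H) ^ n) (W y)) ≤
        LinearMap.range (W : lp (fun _ : ℕ => ℂ) 2 →ₗ[ℂ] lp (fun _ : ℕ => H) 2) := by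
      rw [← hmap]
      rintro _ ⟨x, -, rfl⟩
      exact LinearMap.mem_range_self _ x
    have := Submodule.topologicalClosure_minimal _ hsub (by
      simpa [LinearMap.coe_range] using hclosed)
    intro z hz
    exact this hz

/-- uniqueness of the inner-outer factorization of a vector: if
`W₁ y₁ = W₂ y₂` with `Wᵢ` inner and `yᵢ` outer, then `U = W₂* W₁` is unitary,
commutes with the shift, maps `y₁` to `y₂`, and `W₂ U = W₁`. -/
theorem inner_outer_factorization_of_vector_unique
    {H : Type*} [NormedAddCommGroup H] [InnerProductSpace ℂ H] [CompleteSpace H]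
    (W₁ W₂ : lp (fun _ : ℕ => ℂ) 2 →L[ℂ] lp (fun _ : ℕ => H) 2)
    (hW₁ : Isometry W₁) (hW₂ : Isometry W₂)
    (hW₁S : W₁.comp (shift ℂ) = (shift H).comp W₁)
    (hW₂S : W₂.comp (shift ℂ) = (shift H).comp W₂)
    (y₁ y₂ : lp (fun _ : ℕ => ℂ) 2)
    (hy₁ : (Submodule.span ℂ (Set.range fun n : ℕ => (shift ℂ ^ n) y₁)).topologicalClosure = ⊤)
    (hy₂ : (Submodule.span ℂ (Set.range fun n : ℕ => (shift ℂ ^ n) y₂)).topologicalClosure = ⊤)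
    (hfac : W₁ y₁ = W₂ y₂) :
    (ContinuousLinearMap.adjoint W₂).comp W₁ ∈
        unitary (lp (fun _ : ℕ => ℂ) 2 →L[ℂ] lp (fun _ : ℕ => ℂ) 2) ∧
    ((ContinuousLinearMap.adjoint W₂).comp W₁).comp (shift ℂ) =
        (shift ℂ).comp ((ContinuousLinearMap.adjoint W₂).comp W₁) ∧
    ((ContinuousLinearMap.adjoint W₂).comp W₁) y₁ = y₂ ∧
    W₂.comp ((ContinuousLinearMap.adjoint W₂).comp W₁) = W₁ := by
  set U := (ContinuousLinearMap.adjoint W₂).comp W₁ with hU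
  -- the two ranges agree
  have hrange : Set.range W₁ = Set.range W₂ := by
    rw [range_eq_orbit_closure W₁ hW₁ hW₁S y₁ hy₁,
      range_eq_orbit_closure W₂ hW₂ hW₂S y₂ hy₂, hfac]
  -- key identities
  have key₂ : ∀ x, W₂ (ContinuousLinearMap.adjoint W₂ (W₁ x)) = W₁ x := by
    intro x
    obtain ⟨w, hw⟩ : W₁ x ∈ Set.range W₂ := hrange ▸ Set.mem_range_self x
    rw [← hw, adjoint_apply_self_of_isometry W₂ hW₂]
  have key₁ : ∀ x, W₁ (ContinuousLinearMap.adjoint W₁ (W₂ x)) = W₂ x := by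
    intro x
    obtain ⟨w, hw⟩ : W₂ x ∈ Set.range W₁ := hrange ▸ Set.mem_range_self x
    rw [← hw, adjoint_apply_self_of_isometry W₁ hW₁]
  have hWU : W₂.comp U = W₁ := ContinuousLinearMap.ext fun x => key₂ x
  have hstar : star U = (ContinuousLinearMap.adjoint W₁).comp W₂ := by
    rw [ContinuousLinearMap.star_eq_adjoint, hU, ContinuousLinearMap.adjoint_comp,
      ContinuousLinearMap.adjoint_adjoint]
  have hunit : U ∈ unitary (lp (fun _ : ℕ => ℂ) 2 →L[ℂ] lp (fun _ : ℕ => ℂ) 2) := by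
    rw [Unitary.mem_iff]
    constructor
    · refine ContinuousLinearMap.ext fun x => ?_
      have : W₂ (U x) = W₁ x := key₂ x
      calc (star U * U) x = ContinuousLinearMap.adjoint W₁ (W₂ (U x)) := by
            rw [hstar]; rfl
        _ = x := by rw [this, adjoint_apply_self_of_isometry W₁ hW₁]
    · refine ContinuousLinearMap.ext fun x => ?_
      calc (U * star U) x
          = ContinuousLinearMap.adjoint W₂ (W₁ (ContinuousLinearMap.adjoint W₁ (W₂ x))) := by
            rw [hstar]; rfl
        _ = x := by rw [key₁ x, adjoint_apply_self_of_isometry W₂ hW₂]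
  have hUy : U y₁ = y₂ := by
    show ContinuousLinearMap.adjoint W₂ (W₁ y₁) = y₂
    rw [hfac, adjoint_apply_self_of_isometry W₂ hW₂]
  have hUS : U.comp (shift ℂ) = (shift ℂ).comp U := by
    refine ContinuousLinearMap.ext fun x => ?_
    apply hW₂.injective
    show W₂ (U (shift ℂ x)) = W₂ (shift ℂ (U x))
    have h1 : W₂ (U (shift ℂ x)) = W₁ (shift ℂ x) := key₂ _
    have h2 : W₁ (shift ℂ x) = shift H (W₁ x) := congrFun (congrArg DFunLike.coe hW₁S) x
    have h3 : W₂ (shift ℂ (U x)) = shift H (W₂ (U x)) := congrFun (congrArg DFunLike.coe hW₂S) _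
    rw [h1, h2, h3]
    exact congrArg _ (key₂ x).symm
  exact ⟨hunit, hUS, hUy, hWU⟩


end Shift
end
end

section
/- Let H be a separable complex Hilbert space and S_H the unilateral shift on ℓ²(ℕ,H). For every nonzero T ∈ B(ℓ²(ℕ,H)) commuting with S_H there exist a separable complex Hilbert space K, an isometry W : ℓ²(ℕ,K) → ℓ²(ℕ,H) with W ∘ S_K = S_H ∘ W whose range equals the closure of the range of T, and an operator Y : ℓ²(ℕ,H) → ℓ²(ℕ,K) with dense range satisfying Y ∘ S_H = S_K ∘ Y, such that T = W ∘ Y. -/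
noncomputable section

open scoped ENNReal InnerProductSpace

set_option linter.unusedSectionVars false

namespace Shift

variable (H : Type*) [NormedAddCommGroup H] [InnerProductSpace ℂ H]

variable {H}

variable (H)

variable {H}


section Aux

variable {H : Type*} [NormedAddCommGroup H] [InnerProductSpace ℂ H]

theorem coe_shift (x : lp (fun _ : ℕ => H) 2) : ⇑(shift H x) = shiftFun H ⇑x := rfl

/-- Iterated shift as a linear isometry. -/
def pshift : ℕ → (lp (fun _ : ℕ => H) 2 →ₗᵢ[ℂ] lp (fun _ : ℕ => H) 2)
  | 0 => LinearIsometry.id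
  | n + 1 => (shiftLi H).comp (pshift n)

theorem pshift_zero (x : lp (fun _ : ℕ => H) 2) : pshift 0 x = x := rfl

theorem pshift_succ (n : ℕ) (x : lp (fun _ : ℕ => H) 2) :
    pshift (n + 1) x = shift H (pshift n x) := rfl

theorem pshift_add (a b : ℕ) (x : lp (fun _ : ℕ => H) 2) :
    pshift (a + b) x = pshift a (pshift b x) := by
  induction a with
  | zero => simp [pshift_zero]
  | succ a ih =>
    have : a + b + 1 = (a + b) + 1 := rfl
    rw [show a + 1 + b = (a + b) + 1 by omega, pshift_succ, pshift_succ, ih]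

theorem pshift_shift (n : ℕ) (x : lp (fun _ : ℕ => H) 2) :
    pshift n (shift H x) = pshift (n + 1) x := by
  rw [pshift_add n 1]
  rfl

theorem pshift_coord (n : ℕ) (x : lp (fun _ : ℕ => H) 2) (j : ℕ) (hj : j < n) :
    (⇑(pshift n x)) j = 0 := by
  induction n generalizing j with
  | zero => omega
  | succ n ih =>
    rw [pshift_succ, coe_shift]
    cases j with
    | zero => rfl
    | succ j => exact ih j (by omega)

theorem lp_single_add (i : ℕ) (a b : H) :
    lp.single (E := fun _ : ℕ => H) 2 i (a + b)
      = lp.single (E := fun _ : ℕ => H) 2 i a + lp.single (E := fun _ : ℕ => H) 2 i b := by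
  apply lp.ext
  funext j
  rw [lp.coeFn_add]
  by_cases h : j = i
  · subst h; simp [lp.single_apply_self]
  · simp [lp.single_apply_ne _ _ _ h]

theorem lp_single_isometry (i : ℕ) :
    Isometry (fun a : H => lp.single (E := fun _ : ℕ => H) 2 i a) := by
  apply Isometry.of_dist_eq
  intro a b
  rw [dist_eq_norm, dist_eq_norm]
  have : lp.single (E := fun _ : ℕ => H) 2 i a - lp.single (E := fun _ : ℕ => H) 2 i b
      = lp.single (E := fun _ : ℕ => H) 2 i (a - b) := by
    rw [sub_eq_add_neg, sub_eq_add_neg, lp_single_add, lp.single_neg]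
  rw [this]
  simpa using lp.norm_single (E := fun _ : ℕ => H) (by norm_num : (0:ℝ≥0∞) < 2) i (a - b)

theorem lp_separableSpace [TopologicalSpace.SeparableSpace H] :
    TopologicalSpace.SeparableSpace (lp (fun _ : ℕ => H) 2) := by
  classical
  have h1 : ∀ i : ℕ, TopologicalSpace.IsSeparable
      (Set.range fun a : H => lp.single (E := fun _ : ℕ => H) 2 i a) :=
    fun i => TopologicalSpace.isSeparable_range (lp_single_isometry i).continuous
  have h2 : TopologicalSpace.IsSeparable
      (⋃ i : ℕ, Set.range fun a : H => lp.single (E := fun _ : ℕ => H) 2 i a) :=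
    TopologicalSpace.IsSeparable.iUnion h1
  have h3 := (h2.span (R := ℂ)).closure
  refine TopologicalSpace.isSeparable_univ_iff.1 (h3.mono ?_)
  intro f _
  have hf := lp.hasSum_single (E := fun _ : ℕ => H) (by norm_num : (2:ℝ≥0∞) ≠ ⊤) f
  refine mem_closure_of_tendsto hf (Filter.Eventually.of_forall fun s => ?_)
  refine Submodule.sum_mem _ fun i _ => Submodule.subset_span ?_
  exact Set.mem_iUnion.2 ⟨i, ⟨f i, rfl⟩⟩

theorem orthonormal_subtype_countable {F : Type*} [NormedAddCommGroup F]
    [InnerProductSpace ℂ F] [TopologicalSpace.SeparableSpace F] {w : Set F}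
    (hw : Orthonormal ℂ (Subtype.val : w → F)) : w.Countable := by
  classical
  haveI : Nonempty F := ⟨0⟩
  have hu := TopologicalSpace.denseRange_denseSeq F
  set u := TopologicalSpace.denseSeq F
  have hex : ∀ x : F, ∃ n, dist x (u n) < 1/2 := fun x =>
    Metric.denseRange_iff.1 hu x _ (by norm_num)
  rw [Set.countable_iff_exists_injOn]
  refine ⟨fun x => Classical.choose (hex x), ?_⟩
  intro x hx y hy hxy
  by_contra hne
  have hxy' : Classical.choose (hex x) = Classical.choose (hex y) := hxy
  have hx2 := Classical.choose_spec (hex x)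
  have hy2 := Classical.choose_spec (hex y)
  rw [hxy'] at hx2
  have hd : dist x y < 1 := by
    calc dist x y ≤ dist x (u (Classical.choose (hex y))) + dist (u (Classical.choose (hex y))) y :=
          dist_triangle _ _ _
      _ < 1 := by rw [dist_comm (u _) y] at *; linarith
  have hinner : ⟪x, y⟫_ℂ = 0 := by
    have := hw.2 (i := (⟨x, hx⟩ : w)) (j := (⟨y, hy⟩ : w)) (by simpa [Subtype.ext_iff] using hne)
    simpa using this
  have hnx : ‖x‖ = 1 := by simpa using hw.1 (⟨x, hx⟩ : w)
  have hny : ‖y‖ = 1 := by simpa using hw.1 (⟨y, hy⟩ : w)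
  have hsq : ‖x - y‖ ^ 2 = 2 := by
    rw [@norm_sub_sq ℂ]
    rw [hinner]
    simp [hnx, hny]
    norm_num
  have : dist x y ^ 2 = 2 := by rw [dist_eq_norm]; exact hsq
  nlinarith [dist_nonneg (x := x) (y := y)]

end Aux

section LpCongr

variable {ι κ : Type*} {A B : Type*} [NormedAddCommGroup A] [InnerProductSpace ℂ A]
  [NormedAddCommGroup B] [InnerProductSpace ℂ B]

theorem memℓp_congr (e : ι ≃ κ) (g : A ≃ₗᵢ[ℂ] B) (x : lp (fun _ : ι => A) 2) :
    Memℓp (fun k : κ => g (x (e.symm k))) 2 := by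
  apply memℓp_gen
  have h2 : (0:ℝ) < (2 : ℝ≥0∞).toReal := by norm_num
  have hs : Summable fun i : ι => ‖x i‖ ^ (2 : ℝ≥0∞).toReal := (memℓp_gen_iff h2).1 (lp.memℓp x)
  have := (e.symm.summable_iff (f := fun i : ι => ‖x i‖ ^ (2 : ℝ≥0∞).toReal)).2 hs
  simpa [g.norm_map, Function.comp_def] using this

theorem norm_congr (e : ι ≃ κ) (g : A ≃ₗᵢ[ℂ] B) (x : lp (fun _ : ι => A) 2) :
    ‖(⟨fun k => g (x (e.symm k)), memℓp_congr e g x⟩ : lp (fun _ : κ => B) 2)‖ = ‖x‖ := by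
  have h2 : (0:ℝ) < (2 : ℝ≥0∞).toReal := by norm_num
  rw [lp.norm_eq_tsum_rpow h2, lp.norm_eq_tsum_rpow h2]
  congr 1
  simpa [g.norm_map] using e.symm.tsum_eq (fun i => ‖x i‖ ^ (2 : ℝ≥0∞).toReal)

/-- Congruence of `lp _ 2` spaces along an index equivalence and a fiberwise isometry. -/
def lpCongr (e : ι ≃ κ) (g : A ≃ₗᵢ[ℂ] B) :
    lp (fun _ : ι => A) 2 ≃ₗᵢ[ℂ] lp (fun _ : κ => B) 2 where
  toFun x := ⟨fun k => g (x (e.symm k)), memℓp_congr e g x⟩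
  invFun y := ⟨fun i => g.symm (y (e i)), by
    exact (by simpa using memℓp_congr e.symm g.symm y : Memℓp (fun i => g.symm (y (e i))) 2)⟩
  left_inv x := by apply lp.ext; funext i; simp
  right_inv y := by apply lp.ext; funext k; simp
  map_add' x y := by apply lp.ext; funext k; simp [lp.coeFn_add]; rfl
  map_smul' c x := by apply lp.ext; funext k; simp [lp.coeFn_smul]
  norm_map' x := norm_congr e g x

theorem lpCongr_apply (e : ι ≃ κ) (g : A ≃ₗᵢ[ℂ] B) (x : lp (fun _ : ι => A) 2) (k : κ) :
    (⇑(lpCongr e g x)) k = g (x (e.symm k)) := rfl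

end LpCongr

set_option maxHeartbeats 2000000 in
/-- inner-outer factorization of a nonzero operator commuting with the
shift on `ℓ²(ℕ,H)`, `H` separable: `T = W ∘ Y` with `W` inner (range = closure of range of `T`)
and `Y` outer. -/
theorem inner_outer_factorization_of_commutant
    {H : Type*} [NormedAddCommGroup H] [InnerProductSpace ℂ H] [CompleteSpace H]
    [TopologicalSpace.SeparableSpace H]
    (T : lp (fun _ : ℕ => H) 2 →L[ℂ] lp (fun _ : ℕ => H) 2)
    (hT0 : T ≠ 0)
    (hT : T.comp (shift H) = (shift H).comp T) :
    ∃ (K : Type) (_ : NormedAddCommGroup K) (_ : InnerProductSpace ℂ K),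
      CompleteSpace K ∧ TopologicalSpace.SeparableSpace K ∧
      ∃ (W : lp (fun _ : ℕ => K) 2 →L[ℂ] lp (fun _ : ℕ => H) 2)
        (Y : lp (fun _ : ℕ => H) 2 →L[ℂ] lp (fun _ : ℕ => K) 2),
        Isometry W ∧
        W.comp (shift K) = (shift H).comp W ∧
        LinearMap.range (W : lp (fun _ : ℕ => K) 2 →ₗ[ℂ] lp (fun _ : ℕ => H) 2) = (LinearMap.range (T : lp (fun _ : ℕ => H) 2 →ₗ[ℂ] lp (fun _ : ℕ => H) 2)).topologicalClosure ∧
        DenseRange ⇑Y ∧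
        Y.comp (shift H) = (shift K).comp Y ∧
        T = W.comp Y := by
  classical
  haveI hEsep : TopologicalSpace.SeparableSpace (lp (fun _ : ℕ => H) 2) := lp_separableSpace
  set M : Submodule ℂ (lp (fun _ : ℕ => H) 2) := (LinearMap.range (T : lp (fun _ : ℕ => H) 2 →ₗ[ℂ] lp (fun _ : ℕ => H) 2)).topologicalClosure with hMdef
  have hMclosed : IsClosed (M : Set (lp (fun _ : ℕ => H) 2)) :=
    Submodule.isClosed_topologicalClosure _
  haveI : CompleteSpace M := hMclosed.completeSpace_coe
  have hTmem : ∀ x, T x ∈ M := fun x =>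
    Submodule.le_topologicalClosure _ (LinearMap.mem_range_self (T : lp (fun _ : ℕ => H) 2 →ₗ[ℂ] lp (fun _ : ℕ => H) 2) x)
  have hcomm : ∀ x, T (shift H x) = shift H (T x) := by
    intro x
    have h := ContinuousLinearMap.ext_iff.1 hT x
    simpa using h
  have hSM : ∀ x ∈ M, shift H x ∈ M := by
    intro x hx
    have hx' : x ∈ closure (LinearMap.range (T : lp (fun _ : ℕ => H) 2 →ₗ[ℂ] lp (fun _ : ℕ => H) 2) : Set (lp (fun _ : ℕ => H) 2)) := by
      rw [← Submodule.topologicalClosure_coe]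
      exact hx
    have hmaps : Set.MapsTo (⇑(shift H)) (LinearMap.range (T : lp (fun _ : ℕ => H) 2 →ₗ[ℂ] lp (fun _ : ℕ => H) 2) : Set (lp (fun _ : ℕ => H) 2))
        (LinearMap.range (T : lp (fun _ : ℕ => H) 2 →ₗ[ℂ] lp (fun _ : ℕ => H) 2) : Set (lp (fun _ : ℕ => H) 2)) := by
      rintro _ ⟨y, rfl⟩
      exact ⟨shift H y, hcomm y⟩
    have h2 := map_mem_closure (shift H).continuous hx' hmaps
    rw [← Submodule.topologicalClosure_coe] at h2
    exact h2
  have hpsM : ∀ (n : ℕ) (x : lp (fun _ : ℕ => H) 2), x ∈ M → pshift n x ∈ M := by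
    intro n
    induction n with
    | zero => intro x hx; exact hx
    | succ n ih => intro x hx; rw [pshift_succ]; exact hSM _ (ih x hx)
  set SM : Submodule ℂ (lp (fun _ : ℕ => H) 2) := M.map (shift H).toLinearMap with hSMdef
  have hSMle : SM ≤ M := by
    rintro _ ⟨x, hx, rfl⟩
    exact hSM x hx
  haveI hSMcompl : CompleteSpace SM := by
    have h1 : IsComplete (M : Set (lp (fun _ : ℕ => H) 2)) := hMclosed.isComplete
    have h2 : IsComplete (⇑(shiftLi H) '' (M : Set (lp (fun _ : ℕ => H) 2))) :=
      (LinearIsometry.isComplete_image_iff (shiftLi H)).2 h1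
    have h3 : (SM : Set (lp (fun _ : ℕ => H) 2))
        = ⇑(shiftLi H) '' (M : Set (lp (fun _ : ℕ => H) 2)) := rfl
    rw [← h3] at h2
    exact h2.completeSpace_coe
  set Ks : Submodule ℂ (lp (fun _ : ℕ => H) 2) := M ⊓ SMᗮ with hKsdef
  have hKsclosed : IsClosed (Ks : Set (lp (fun _ : ℕ => H) 2)) := by
    have : (Ks : Set (lp (fun _ : ℕ => H) 2))
        = (M : Set (lp (fun _ : ℕ => H) 2)) ∩ (SMᗮ : Set (lp (fun _ : ℕ => H) 2)) := rfl
    rw [this]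
    exact hMclosed.inter (Submodule.isClosed_orthogonal SM)
  haveI : CompleteSpace Ks := hKsclosed.completeSpace_coe
  haveI hKsSep : TopologicalSpace.SeparableSpace Ks := by
    have h1 : TopologicalSpace.IsSeparable (Ks : Set (lp (fun _ : ℕ => H) 2)) :=
      TopologicalSpace.IsSeparable.mono
        (TopologicalSpace.isSeparable_univ_iff.2 hEsep) (Set.subset_univ _)
    exact h1.separableSpace
  have hSMmem : ∀ (n : ℕ) (x : lp (fun _ : ℕ => H) 2), x ∈ M → pshift (n+1) x ∈ SM := by
    intro n x hx
    rw [pshift_succ]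
    exact ⟨pshift n x, hpsM n x hx, rfl⟩
  have hoKs : ∀ k : lp (fun _ : ℕ => H) 2, k ∈ Ks → ∀ y ∈ SM, ⟪k, y⟫_ℂ = 0 := by
    intro k hk y hy
    exact inner_eq_zero_symm.1 ((Submodule.mem_orthogonal SM k).1 hk.2 y hy)
  let V : ∀ _ : ℕ, Ks →ₗᵢ[ℂ] M := fun n =>
    { toLinearMap := LinearMap.codRestrict M ((pshift n).toLinearMap.comp Ks.subtype)
        (fun k => hpsM n k.1 k.2.1)
      norm_map' := fun k => (pshift n).norm_map k.1 }
  have hVcoe : ∀ (n : ℕ) (k : Ks),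
      ((V n k : M) : lp (fun _ : ℕ => H) 2) = pshift n k.1 := fun n k => rfl
  have hofam : OrthogonalFamily ℂ (fun _ : ℕ => Ks) V := by
    have key : ∀ i j : ℕ, i < j → ∀ a b : Ks, ⟪V i a, V j b⟫_ℂ = 0 := by
      intro i j hij a b
      rw [Submodule.coe_inner, hVcoe, hVcoe]
      obtain ⟨d, rfl⟩ : ∃ d, j = i + (d + 1) := ⟨j - i - 1, by omega⟩
      rw [pshift_add, LinearIsometry.inner_map_map]
      exact hoKs a.1 a.2 _ (hSMmem d b.1 b.2.1)
    intro i j hij a b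
    rcases lt_or_gt_of_ne hij with h | h
    · exact key i j h a b
    · exact inner_eq_zero_symm.1 (key j i h b a)
  have hstep : ∀ u ∈ M, (∀ k : Ks, ⟪(k : lp (fun _ : ℕ => H) 2), u⟫_ℂ = 0) → u ∈ SM := by
    intro u huM hKu
    have hqo : u - (SM.orthogonalProjectionOnto u : lp (fun _ : ℕ => H) 2) ∈ SMᗮ :=
      Submodule.sub_starProjection_mem_orthogonal (K := SM) u
    have hqM : u - (SM.orthogonalProjectionOnto u : lp (fun _ : ℕ => H) 2) ∈ M :=
      Submodule.sub_mem _ huM (hSMle (SM.orthogonalProjectionOnto u).2)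
    set q := u - (SM.orthogonalProjectionOnto u : lp (fun _ : ℕ => H) 2) with hq
    have h1 : ⟪q, u⟫_ℂ = 0 := hKu ⟨q, hqM, hqo⟩
    have h2 : ⟪q, (SM.orthogonalProjectionOnto u : lp (fun _ : ℕ => H) 2)⟫_ℂ = 0 :=
      inner_eq_zero_symm.1
        ((Submodule.mem_orthogonal SM q).1 hqo _ (SM.orthogonalProjectionOnto u).2)
    have h3 : ⟪q, q⟫_ℂ = 0 := by
      have h4 : ⟪q, u - (SM.orthogonalProjectionOnto u : lp (fun _ : ℕ => H) 2)⟫_ℂ = 0 := by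
        rw [inner_sub_right, h1, h2, sub_zero]
      rwa [← hq] at h4
    have hq0 : q = 0 := inner_self_eq_zero.1 h3
    have h5 : u - (SM.orthogonalProjectionOnto u : lp (fun _ : ℕ => H) 2) = 0 := by
      rw [← hq]; exact hq0
    have h6 : u = (SM.orthogonalProjectionOnto u : lp (fun _ : ℕ => H) 2) := by
      have := sub_eq_zero.1 h5; exact this
    rw [h6]
    exact (SM.orthogonalProjectionOnto u).2
  have htotal : (⨆ n, LinearMap.range (V n).toLinearMap).topologicalClosure = ⊤ := by
    rw [Submodule.topologicalClosure_eq_top_iff, Submodule.eq_bot_iff]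
    intro m hm
    have hm' : ∀ (n : ℕ) (k : Ks),
        ⟪pshift n k.1, (m : lp (fun _ : ℕ => H) 2)⟫_ℂ = 0 := by
      intro n k
      have hmem : V n k ∈ ⨆ n, LinearMap.range (V n).toLinearMap :=
        Submodule.mem_iSup_of_mem n ⟨k, rfl⟩
      have h0 := (Submodule.mem_orthogonal _ m).1 hm (V n k) hmem
      rw [Submodule.coe_inner, hVcoe] at h0
      exact h0
    have claim : ∀ n : ℕ, ∃ u, u ∈ M ∧ (m : lp (fun _ : ℕ => H) 2) = pshift n u := by
      intro n
      induction n with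
      | zero => exact ⟨m.1, m.2, rfl⟩
      | succ n ih =>
        obtain ⟨u, huM, hmu⟩ := ih
        have hKu : ∀ k : Ks, ⟪(k : lp (fun _ : ℕ => H) 2), u⟫_ℂ = 0 := by
          intro k
          have h7 := hm' n k
          rw [hmu] at h7
          rwa [LinearIsometry.inner_map_map] at h7
        obtain ⟨v, hvM, hv⟩ := Submodule.mem_map.1 (hstep u huM hKu)
        have hv' : shift H v = u := hv
        refine ⟨v, hvM, ?_⟩
        rw [hmu, ← hv', pshift_shift]
    have hm0 : (m : lp (fun _ : ℕ => H) 2) = 0 := by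
      apply lp.ext
      funext j
      obtain ⟨u, _, hmu⟩ := claim (j + 1)
      have h5 := pshift_coord (j + 1) u j (by omega)
      rw [← hmu] at h5
      simpa using h5
    exact Subtype.ext hm0
  have hHS : IsHilbertSum ℂ (fun _ : ℕ => Ks) V := IsHilbertSum.mk hofam htotal.ge
  obtain ⟨w, b, hb⟩ := exists_hilbertBasis ℂ Ks
  have hwc : w.Countable := by
    apply orthonormal_subtype_countable (F := Ks)
    have hob := b.orthonormal
    rwa [hb] at hob
  haveI : Countable w := hwc.to_subtype
  obtain ⟨g, hg⟩ : ∃ g : w → ℕ, Function.Injective g := Countable.exists_injective_nat w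
  let e : w ≃ Set.range g := Equiv.ofInjective g hg
  let gK : lp (fun _ : ↥(Set.range g) => ℂ) 2 ≃ₗᵢ[ℂ] Ks :=
    ((lpCongr e (LinearIsometryEquiv.refl ℂ ℂ)).symm).trans b.repr.symm
  haveI hKsep : TopologicalSpace.SeparableSpace (lp (fun _ : ↥(Set.range g) => ℂ) 2) :=
    (gK.symm.surjective.denseRange).separableSpace gK.symm.continuous
  let ge : lp (fun _ : ℕ => lp (fun _ : ↥(Set.range g) => ℂ) 2) 2
      ≃ₗᵢ[ℂ] lp (fun _ : ℕ => Ks) 2 := lpCongr (Equiv.refl ℕ) gK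
  let U : lp (fun _ : ℕ => lp (fun _ : ↥(Set.range g) => ℂ) 2) 2 ≃ₗᵢ[ℂ] M :=
    ge.trans hHS.linearIsometryEquiv.symm
  let W : lp (fun _ : ℕ => lp (fun _ : ↥(Set.range g) => ℂ) 2) 2 →L[ℂ]
      lp (fun _ : ℕ => H) 2 := M.subtypeL.comp U.toLinearIsometry.toContinuousLinearMap
  let Tc : lp (fun _ : ℕ => H) 2 →L[ℂ] M := T.codRestrict M hTmem
  let Y : lp (fun _ : ℕ => H) 2 →L[ℂ]
      lp (fun _ : ℕ => lp (fun _ : ↥(Set.range g) => ℂ) 2) 2 :=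
    U.symm.toLinearIsometry.toContinuousLinearMap.comp Tc
  have hWiso : Isometry ⇑W := by
    have h1 : ⇑W = (Subtype.val : M → lp (fun _ : ℕ => H) 2) ∘ ⇑U := rfl
    rw [h1]
    exact isometry_subtype_coe.comp U.isometry
  have hWT : ∀ x, W (Y x) = T x := by
    intro x
    show ((U (U.symm (Tc x)) : M) : lp (fun _ : ℕ => H) 2) = T x
    rw [U.apply_symm_apply]
    rfl
  -- the heart: W intertwines the shifts
  have hPhi : ∀ y : lp (fun _ : ℕ => Ks) 2,
      HasSum (fun n => pshift n ((y n : Ks) : lp (fun _ : ℕ => H) 2))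
        ((hHS.linearIsometryEquiv.symm y : M) : lp (fun _ : ℕ => H) 2) := by
    intro y
    have h0 := (hHS.hasSum_linearIsometryEquiv_symm y).mapL M.subtypeL
    simp only [Submodule.subtypeL_apply, hVcoe] at h0
    exact h0
  have key : ∀ y : lp (fun _ : ℕ => Ks) 2,
      ((hHS.linearIsometryEquiv.symm (shift Ks y) : M) : lp (fun _ : ℕ => H) 2)
        = shift H ((hHS.linearIsometryEquiv.symm y : M) : lp (fun _ : ℕ => H) 2) := by
    intro y
    have h3 := hPhi (shift Ks y)
    have hzero : pshift 0 (((shift Ks y) 0 : Ks) : lp (fun _ : ℕ => H) 2) = 0 := by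
      have h1 : ((shift Ks y) 0 : Ks) = 0 := rfl
      rw [h1, pshift_zero]
      rfl
    have hfun : (fun n => pshift (n + 1)
          (((shift Ks y) (n + 1) : Ks) : lp (fun _ : ℕ => H) 2))
        = fun n => shift H (pshift n ((y n : Ks) : lp (fun _ : ℕ => H) 2)) := by
      funext n
      have h1 : ((shift Ks y) (n + 1) : Ks) = y n := rfl
      rw [h1, pshift_succ]
    have h2 : HasSum (fun n => pshift (n + 1)
          (((shift Ks y) (n + 1) : Ks) : lp (fun _ : ℕ => H) 2))
        (shift H ((hHS.linearIsometryEquiv.symm y : M) : lp (fun _ : ℕ => H) 2)) := by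
      rw [hfun]
      exact (hPhi y).mapL (shift H)
    have h5 : HasSum (fun n => pshift n
          (((shift Ks y) n : Ks) : lp (fun _ : ℕ => H) 2))
        (shift H ((hHS.linearIsometryEquiv.symm y : M) : lp (fun _ : ℕ => H) 2)) := by
      refine (hasSum_nat_add_iff' 1).1 ?_
      rw [Finset.sum_range_one, hzero, sub_zero]
      exact h2
    exact h3.unique h5
  have hgeShift : ∀ x, ge (shift (lp (fun _ : ↥(Set.range g) => ℂ) 2) x) = shift Ks (ge x) := by
    intro x
    apply lp.ext
    funext n
    cases n with
    | zero =>
      show gK ((shift (lp (fun _ : ↥(Set.range g) => ℂ) 2) x) 0) = 0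
      have h1 : (shift (lp (fun _ : ↥(Set.range g) => ℂ) 2) x) 0
          = (0 : lp (fun _ : ↥(Set.range g) => ℂ) 2) := rfl
      rw [h1, gK.map_zero]
    | succ n => rfl
  have hWS : W.comp (shift (lp (fun _ : ↥(Set.range g) => ℂ) 2))
      = (shift H).comp W := by
    apply ContinuousLinearMap.ext
    intro x
    show ((hHS.linearIsometryEquiv.symm
        (ge (shift (lp (fun _ : ↥(Set.range g) => ℂ) 2) x)) : M) : lp (fun _ : ℕ => H) 2)
      = shift H ((hHS.linearIsometryEquiv.symm (ge x) : M) : lp (fun _ : ℕ => H) 2)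
    rw [hgeShift x]
    exact key (ge x)
  have hYS : Y.comp (shift H) = (shift (lp (fun _ : ↥(Set.range g) => ℂ) 2)).comp Y := by
    apply ContinuousLinearMap.ext
    intro x
    apply hWiso.injective
    have e1 : W (Y (shift H x)) = T (shift H x) := hWT _
    have e2 : shift H (T x) = shift H (W (Y x)) := by rw [hWT]
    have e3 := ContinuousLinearMap.ext_iff.1 hWS (Y x)
    calc W ((Y.comp (shift H)) x) = T (shift H x) := e1
      _ = shift H (T x) := hcomm x
      _ = shift H (W (Y x)) := e2
      _ = W (shift (lp (fun _ : ↥(Set.range g) => ℂ) 2) (Y x)) := e3.symm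
  refine ⟨lp (fun _ : ↥(Set.range g) => ℂ) 2, inferInstance, inferInstance, inferInstance,
    hKsep, W, Y, hWiso, hWS, ?_, ?_, hYS, ?_⟩
  · -- range W = M
    apply le_antisymm
    · rintro _ ⟨x, rfl⟩
      exact (U x).2
    · intro y hy
      refine ⟨U.symm ⟨y, hy⟩, ?_⟩
      show ((U (U.symm ⟨y, hy⟩) : M) : lp (fun _ : ℕ => H) 2) = y
      rw [U.apply_symm_apply]
  · -- dense range Y
    have hTc : DenseRange ⇑Tc := by
      rw [denseRange_iff_closure_range]
      have hemb : Topology.IsEmbedding ((↑) : M → lp (fun _ : ℕ => H) 2) :=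
        Topology.IsEmbedding.subtypeVal
      rw [hemb.closure_eq_preimage_closure_image]
      have himg : (Subtype.val '' Set.range ⇑Tc)
          = (LinearMap.range (T : lp (fun _ : ℕ => H) 2 →ₗ[ℂ] lp (fun _ : ℕ => H) 2) : Set (lp (fun _ : ℕ => H) 2)) := by
        ext z
        constructor
        · rintro ⟨-, ⟨x, rfl⟩, rfl⟩
          exact ⟨x, rfl⟩
        · rintro ⟨x, rfl⟩
          exact ⟨Tc x, ⟨x, rfl⟩, rfl⟩
      rw [himg, ← Submodule.topologicalClosure_coe]
      ext ⟨z, hz⟩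
      exact ⟨fun _ => trivial, fun _ => hz⟩
    have hcomp : DenseRange (⇑(U.symm.toLinearIsometry.toContinuousLinearMap) ∘ ⇑Tc) :=
      (U.symm.surjective.denseRange).comp hTc U.symm.continuous
    exact hcomp
  · -- T = W ∘ Y
    apply ContinuousLinearMap.ext
    intro x
    exact (hWT x).symm


end Shift
end
end
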